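/- Let D ≥ 3 be an integer and set T(w) = (1 − √(1 − 4w))/(2w) for 0 < w ≤ 1/4. Then the limit as z tends to (4D)^{-1} from below of √(1 − 4Dz) · D · T(Dz)^5 · (z/(1 − z·T(Dz)²)) · (D(D−1)·z²·T(Dz)²/((1 − D·z·T(Dz)²)(1 − z·T(Dz)²))) exists and equals D/(D−1). -/

import Mathlib

open Filter

noncomputable def Tgf (w : ℝ) : ℝ := (1 - Real.sqrt (1 - 4 * w)) / (2 * w)

lemma tgf_quarter : Tgf (1/4) = 2 := by
  norm_num [Tgf]

-- basic facts for 0 < w < 1/4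
lemma tgf_facts (w : ℝ) (hw : 0 < w) (hw4 : w < 1/4) :
    w * (Tgf w)^2 = Tgf w - 1 ∧ 1 < Tgf w ∧ Tgf w < 2 ∧
    Real.sqrt (1 - 4*w) * Tgf w = 1 - w * (Tgf w)^2 := by
  set s := Real.sqrt (1 - 4*w) with hs
  have h4 : (0:ℝ) < 1 - 4*w := by linarith
  have hs2 : s^2 = 1 - 4*w := Real.sq_sqrt h4.le
  have hspos : 0 < s := Real.sqrt_pos.mpr h4
  have hs1 : s < 1 := by nlinarith
  have h2wT : 2 * w * Tgf w = 1 - s := by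
    rw [Tgf]; field_simp; rw [mul_comm w 4, hs]
  have h1 : w * (Tgf w)^2 = Tgf w - 1 := by nlinarith [h2wT, hs2]
  have hT1 : 1 < Tgf w := by
    rw [Tgf]; rw [lt_div_iff₀ (by linarith)]; nlinarith
  have hT2 : Tgf w < 2 := by nlinarith [h2wT]
  refine ⟨h1, hT1, hT2, ?_⟩
  nlinarith [h2wT, hs2, hT1]

lemma key (D : ℕ) (hD : 3 ≤ D) (z : ℝ) (hz0 : 0 < z) (hz : z < 1/(4*(D:ℝ))) :
    Real.sqrt (1 - 4 * (D : ℝ) * z) * (D : ℝ) * (Tgf ((D : ℝ) * z)) ^ 5 *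
          (z / (1 - z * (Tgf ((D : ℝ) * z)) ^ 2)) *
          ((D : ℝ) * ((D : ℝ) - 1) * z ^ 2 * (Tgf ((D : ℝ) * z)) ^ 2 /
            ((1 - (D : ℝ) * z * (Tgf ((D : ℝ) * z)) ^ 2) *
              (1 - z * (Tgf ((D : ℝ) * z)) ^ 2)))
    = (D:ℝ)^2 * ((D:ℝ)-1) * z^3 * (Tgf ((D:ℝ)*z))^6 / (1 - z * (Tgf ((D:ℝ)*z))^2)^2 := by
  have hDpos : (0:ℝ) < D := by positivity
  have hD3 : (3:ℝ) ≤ D := by exact_mod_cast hD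
  set w := (D:ℝ) * z with hwdef
  have hw : 0 < w := by positivity
  have hw4 : w < 1/4 := by
    rw [hwdef]
    calc (D:ℝ) * z < (D:ℝ) * (1/(4*(D:ℝ))) := by
          exact mul_lt_mul_of_pos_left hz hDpos
      _ = 1/4 := by field_simp
  obtain ⟨h1, hT1, hT2, h2⟩ := tgf_facts w hw hw4
  set T := Tgf w with hT
  set s := Real.sqrt (1 - 4*w) with hs
  have hsrw : Real.sqrt (1 - 4 * (D:ℝ) * z) = s := by rw [hs, hwdef]; ring_nf
  have hspos : 0 < s := Real.sqrt_pos.mpr (by linarith)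
  -- 1 - D z T² = 1 - w T² = s T
  have hden1 : 1 - (D:ℝ) * z * T^2 = s * T := by rw [show (D:ℝ)*z = w from rfl]; linarith
  -- z T² = (T-1)/D  and 1 - z T² > 0
  have hzT : z * T^2 = (T - 1)/(D:ℝ) := by
    rw [eq_div_iff hDpos.ne', ← h1, hwdef]; ring
  have hden2 : (0:ℝ) < 1 - z * T^2 := by
    rw [hzT]; rw [sub_pos, div_lt_one hDpos]; linarith
  rw [hsrw, hden1]
  have hTpos : (0:ℝ) < T := by linarith
  field_simp

lemma tgf_contAt : ContinuousAt Tgf (1/4) := by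
  unfold Tgf
  apply ContinuousAt.div
  · exact (continuous_const.sub (Real.continuous_sqrt.comp (by continuity))).continuousAt
  · exact (continuous_const.mul continuous_id).continuousAt
  · norm_num

theorem one_loop_colored_tadpole_critical (D : ℕ) (hD : 3 ≤ D) :
    Tendsto
      (fun z : ℝ =>
        Real.sqrt (1 - 4 * (D : ℝ) * z) * (D : ℝ) * (Tgf ((D : ℝ) * z)) ^ 5 *
          (z / (1 - z * (Tgf ((D : ℝ) * z)) ^ 2)) *
          ((D : ℝ) * ((D : ℝ) - 1) * z ^ 2 * (Tgf ((D : ℝ) * z)) ^ 2 /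
            ((1 - (D : ℝ) * z * (Tgf ((D : ℝ) * z)) ^ 2) *
              (1 - z * (Tgf ((D : ℝ) * z)) ^ 2))))
      (nhdsWithin (1 / (4 * (D : ℝ))) (Set.Iio (1 / (4 * (D : ℝ)))))
      (nhds ((D : ℝ) / ((D : ℝ) - 1))) := by
  have hDpos : (0:ℝ) < D := by positivity
  have hD3 : (3:ℝ) ≤ D := by exact_mod_cast hD
  set c : ℝ := 1/(4*(D:ℝ)) with hc
  have hcpos : 0 < c := by positivity
  set g : ℝ → ℝ := fun z =>
    (D:ℝ)^2 * ((D:ℝ)-1) * z^3 * (Tgf ((D:ℝ)*z))^6 / (1 - z * (Tgf ((D:ℝ)*z))^2)^2 with hg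
  have hDc : (D:ℝ) * c = 1/4 := by rw [hc]; field_simp
  have hTc : Tgf ((D:ℝ)*c) = 2 := by rw [hDc, tgf_quarter]
  have h1 : ((D:ℝ)-1) ≠ 0 := by linarith
  have hDne : (D:ℝ) ≠ 0 := hDpos.ne'
  have hgc : g c = (D:ℝ) / ((D:ℝ)-1) := by
    rw [hg]; simp only [hTc]
    rw [hc]; field_simp
    have hne : ((4:ℝ)*(D:ℝ))^3*(4*(D:ℝ)-2^2)^2 ≠ 0 := by
      apply mul_ne_zero (by positivity)
      exact pow_ne_zero _ (by intro h; apply h1; linarith)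
    rw [div_eq_iff (pow_ne_zero _ (by intro h; apply h1; linarith))]; ring
  have hTcomp : ContinuousAt (fun z : ℝ => Tgf ((D:ℝ)*z)) c := by
    have h := tgf_contAt
    rw [← hDc] at h
    exact h.comp (by fun_prop)
  have hden : (1 - c * (Tgf ((D:ℝ)*c))^2)^2 ≠ 0 := by
    rw [hTc, hc]
    have : 1 - 1/(4*(D:ℝ)) * 2^2 = ((D:ℝ)-1)/D := by field_simp; ring
    rw [this]
    positivity
  have hcont : ContinuousAt g c := by
    rw [hg]
    exact ContinuousAt.div (by fun_prop (disch := exact hTcomp))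
      (by fun_prop (disch := exact hTcomp)) hden
  have htendsto : Tendsto g (nhdsWithin c (Set.Iio c)) (nhds ((D:ℝ)/((D:ℝ)-1))) := by
    rw [← hgc]
    exact hcont.continuousWithinAt.tendsto
  refine htendsto.congr' ?_
  have hpos : ∀ᶠ z in nhdsWithin c (Set.Iio c), 0 < z :=
    eventually_nhdsWithin_of_eventually_nhds (eventually_gt_nhds hcpos)
  filter_upwards [hpos, self_mem_nhdsWithin] with z hz0 hzc
  exact (key D hD z hz0 hzc).symm
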